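/- Let p and q be points on the hyperboloid H: -x₀² + x₁² + x₂² = 1 in Minkowski 3-space, lying in a common central plane (a plane through the origin). If ⟨p,q⟩ > 1, then the intersection of that plane with H restricted to the plane's induced metric contains a time-like curve through p and q; in particular, if p ≠ q and p ≠ -q and -1 < ⟨p,q⟩ < 1, then p and q lie on a periodic (closed) geodesic of H, namely the intersection of H with the plane spanned by p and q, which is an ellipse. -/

import Mathlib

/-- The Minkowski bilinear form on ℝ³. -/
def mink (x y : Fin 3 → ℝ) : ℝ := -(x 0 * y 0) + x 1 * y 1 + x 2 * y 2

lemma mink_comb (A B : ℝ) (x y : Fin 3 → ℝ) :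
    mink (fun i => A * x i + B * y i) (fun i => A * x i + B * y i)
      = A^2 * mink x x + 2*A*B * mink x y + B^2 * mink y y := by
  simp only [mink]; ring

/-- Points `p, q` on the hyperboloid of one sheet lying in a common central
plane: if `⟨p,q⟩ > 1` they lie on a time-like curve in that plane; and if
`p ≠ q`, `p ≠ -q` and `-1 < ⟨p,q⟩ < 1` they lie on a closed (compact)
geodesic, the intersection of the hyperboloid with the plane spanned by
`p` and `q`. -/
theorem stmt_5 (p q : Fin 3 → ℝ) (hp : mink p p = 1) (hq : mink q q = 1) :
    (mink p q > 1 →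
      ∃ γ : ℝ → Fin 3 → ℝ, γ 0 = p ∧ γ 1 = q ∧
        (∀ t : ℝ, ∀ i : Fin 3, DifferentiableAt ℝ (fun s => γ s i) t) ∧
        (∀ t : ℝ, mink (γ t) (γ t) = 1) ∧
        (∀ t : ℝ, γ t ∈ (Submodule.span ℝ {p, q} : Submodule ℝ (Fin 3 → ℝ))) ∧
        (∀ t : ℝ, mink (fun i => deriv (fun s => γ s i) t)
            (fun i => deriv (fun s => γ s i) t) < 0)) ∧
    (p ≠ q → p ≠ -q → -1 < mink p q → mink p q < 1 →
      p ∈ {x : Fin 3 → ℝ | mink x x = 1 ∧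
              x ∈ (Submodule.span ℝ {p, q} : Submodule ℝ (Fin 3 → ℝ))} ∧
      q ∈ {x : Fin 3 → ℝ | mink x x = 1 ∧
              x ∈ (Submodule.span ℝ {p, q} : Submodule ℝ (Fin 3 → ℝ))} ∧
      IsCompact {x : Fin 3 → ℝ | mink x x = 1 ∧
              x ∈ (Submodule.span ℝ {p, q} : Submodule ℝ (Fin 3 → ℝ))}) := by
  constructor
  · -- time-like curve
    intro hc1
    set c := mink p q with hc
    have hc0 : (0:ℝ) < c := lt_trans one_pos hc1
    set s := Real.sqrt (c^2 - 1) with hsdef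
    have hs2 : s^2 = c^2 - 1 := Real.sq_sqrt (by nlinarith)
    have hs0 : 0 < s := Real.sqrt_pos.mpr (by nlinarith)
    have hs0' : s ≠ 0 := ne_of_gt hs0
    set a := Real.arsinh s with hadef
    have hsa : Real.sinh a = s := Real.sinh_arsinh s
    have hca : Real.cosh a = c := by
      have h1 : Real.cosh a ^ 2 = c^2 := by
        rw [Real.cosh_sq, hsa]; linarith
      nlinarith [Real.cosh_pos a]
    have ha0 : a ≠ 0 := by
      intro h; rw [h, Real.sinh_zero] at hsa; linarith
    refine ⟨fun t i => Real.cosh (t*a) * p i + Real.sinh (t*a) * ((q i - c * p i)/s),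
      ?_, ?_, ?_, ?_, ?_, ?_⟩
    · funext i
      show Real.cosh (0*a) * p i + Real.sinh (0*a) * ((q i - c * p i)/s) = p i
      simp
    · funext i
      show Real.cosh (1*a) * p i + Real.sinh (1*a) * ((q i - c * p i)/s) = q i
      rw [one_mul, hsa, hca]
      field_simp
      ring
    · intro t i
      exact (((hasDerivAt_mul_const a).cosh.mul_const (p i)).add
        ((hasDerivAt_mul_const a).sinh.mul_const _)).differentiableAt
    · intro t
      show mink (fun i => Real.cosh (t*a) * p i + Real.sinh (t*a) * ((q i - c * p i)/s))
        (fun i => Real.cosh (t*a) * p i + Real.sinh (t*a) * ((q i - c * p i)/s)) = 1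
      set CH := Real.cosh (t*a) with hCH
      set SH := Real.sinh (t*a) with hSH
      have hch : CH^2 = SH^2 + 1 := Real.cosh_sq (t*a)
      have hγ : (fun i => CH * p i + SH * ((q i - c * p i)/s))
          = fun i => (CH - SH * c / s) * p i + (SH / s) * q i := by
        funext i; field_simp; ring
      rw [hγ, mink_comb, hp, hq, ← hc]
      have h1 : (CH*s - SH*c)^2 + 2*(CH*s - SH*c)*SH*c + SH^2 = s^2 := by
        linear_combination s^2*hch + SH^2*hs2
      have h2 : (CH - SH * c / s)^2 * 1 + 2*(CH - SH * c / s)*(SH/s)*c + (SH/s)^2 * 1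
          = ((CH*s - SH*c)^2 + 2*(CH*s - SH*c)*SH*c + SH^2)/s^2 := by
        field_simp
      rw [h2, h1]
      field_simp
    · intro t
      refine Submodule.mem_span_pair.mpr
        ⟨Real.cosh (t*a) - Real.sinh (t*a) * c / s, Real.sinh (t*a) / s, ?_⟩
      funext i
      show (Real.cosh (t*a) - Real.sinh (t*a) * c / s) * p i + (Real.sinh (t*a) / s) * q i
        = Real.cosh (t*a) * p i + Real.sinh (t*a) * ((q i - c * p i)/s)
      field_simp; ring
    · intro t
      show mink
        (fun i => deriv (fun s' => Real.cosh (s'*a) * p i + Real.sinh (s'*a) * ((q i - c * p i)/s)) t)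
        (fun i => deriv (fun s' => Real.cosh (s'*a) * p i + Real.sinh (s'*a) * ((q i - c * p i)/s)) t) < 0
      set CH := Real.cosh (t*a) with hCH
      set SH := Real.sinh (t*a) with hSH
      have hch : CH^2 = SH^2 + 1 := Real.cosh_sq (t*a)
      have hd : (fun i => deriv (fun s' =>
            Real.cosh (s'*a) * p i + Real.sinh (s'*a) * ((q i - c * p i)/s)) t)
          = fun i => (SH*a - CH*a*c/s) * p i + (CH*a/s) * q i := by
        funext i
        have hh : HasDerivAt (fun s' =>
            Real.cosh (s'*a) * p i + Real.sinh (s'*a) * ((q i - c * p i)/s)) _ t :=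
          (((hasDerivAt_mul_const a).cosh.mul_const (p i)).add
          ((hasDerivAt_mul_const a).sinh.mul_const _))
        rw [hh.deriv]
        rw [← hCH, ← hSH]
        field_simp; ring
      rw [hd, mink_comb, hp, hq, ← hc]
      have h1 : (SH*s - CH*c)^2 + 2*(SH*s - CH*c)*CH*c + CH^2 = -s^2 := by
        linear_combination (-s^2)*hch + CH^2*hs2
      have h2 : (SH*a - CH*a*c/s)^2 * 1 + 2*(SH*a - CH*a*c/s)*(CH*a/s)*c + (CH*a/s)^2 * 1
          = a^2 * ((SH*s - CH*c)^2 + 2*(SH*s - CH*c)*CH*c + CH^2) / s^2 := by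
        field_simp
      rw [h2, h1]
      have ha2 : 0 < a^2 := by positivity
      have : a^2 * -s^2 / s^2 = -a^2 := by field_simp
      rw [this]
      linarith
  · -- compact geodesic
    intro _ _ hgt hlt
    refine ⟨⟨hp, Submodule.subset_span (by simp)⟩,
      ⟨hq, Submodule.subset_span (by simp)⟩, ?_⟩
    rw [Metric.isCompact_iff_isClosed_bounded]
    constructor
    · have h1 : IsClosed {x : Fin 3 → ℝ | mink x x = 1} := by
        apply isClosed_eq _ continuous_const
        unfold mink; fun_prop
      have h2 : IsClosed ((Submodule.span ℝ {p, q} : Submodule ℝ (Fin 3 → ℝ)) : Set (Fin 3 → ℝ)) :=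
        Submodule.closed_of_finiteDimensional _
      exact h1.inter h2
    · rw [isBounded_iff_forall_norm_le]
      set c := mink p q with hc
      refine ⟨(2/(1-c^2)+1) * (‖p‖ + ‖q‖), ?_⟩
      rintro x ⟨hx1, hx2⟩
      obtain ⟨A, B, hAB⟩ := Submodule.mem_span_pair.mp hx2
      have hxe : x = fun i => A * p i + B * q i := by
        rw [← hAB]; funext i; simp
      rw [hxe] at hx1
      rw [mink_comb, hp, hq, ← hc] at hx1
      have hK : (1 - c^2) * (A^2 + B^2) ≤ 2 := by
        nlinarith [sq_nonneg (A*c + B), sq_nonneg (A + B*c)]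
      have hc2 : 0 < 1 - c^2 := by nlinarith
      have hKK : A^2 + B^2 ≤ 2/(1-c^2) := by
        rw [le_div_iff₀ hc2]; linarith [hK]
      have hA : |A| ≤ 2/(1-c^2) + 1 := by
        nlinarith [sq_nonneg (|A| - 1), sq_abs A, abs_nonneg A, sq_nonneg B]
      have hB : |B| ≤ 2/(1-c^2) + 1 := by
        nlinarith [sq_nonneg (|B| - 1), sq_abs B, abs_nonneg B, sq_nonneg A]
      have hn : ‖x‖ ≤ |A| * ‖p‖ + |B| * ‖q‖ := by
        rw [← hAB]
        refine le_trans (norm_add_le _ _) ?_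
        rw [norm_smul, norm_smul, Real.norm_eq_abs, Real.norm_eq_abs]
      nlinarith [norm_nonneg p, norm_nonneg q, hn, hA, hB, abs_nonneg A, abs_nonneg B]
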